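/- There exists a binary sequence x ∈ {0,1}^ℕ that is normal in base 2 and satisfies lim_{n→∞} L_n(x)/log₂ n = 0. -/

import Mathlib

open Filter

open Classical in
/-- `L_n(x)`: the maximal length of a run of consecutive ones among the first `n`
digits (positions `1,…,n`) of the binary sequence `x`. -/
noncomputable def runL (x : ℕ → Bool) (n : ℕ) : ℕ :=
  Nat.findGreatest
    (fun j => ∃ i, i + j ≤ n ∧ ∀ k, 1 ≤ k → k ≤ j → x (i + k) = true) n

/-- `N(x, w, n)`: the number of occurrences of the block `w` in `x` starting at
a position `i` with `1 ≤ i ≤ n`. -/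
def occCount (x : ℕ → Bool) (w : List Bool) (n : ℕ) : ℕ :=
  ((Finset.Icc 1 n).filter
    (fun i => ∀ k ∈ Finset.range w.length, x (i + k) = w.getD k false)).card

/-- A binary sequence is normal in base 2 if every nonempty block `w` appears
with frequency `2^{-|w|}`. -/
def NormalBaseTwo (x : ℕ → Bool) : Prop :=
  ∀ w : List Bool, w ≠ [] →
    Tendsto (fun n : ℕ => (occCount x w n : ℝ) / (n : ℝ)) atTop
      (nhds (1 / 2 ^ w.length))

section Aux
open Finset

/-! ### Counting numbers with prescribed bits -/

private lemma halfCount (N : ℕ) (Q : ℕ → Prop) [DecidablePred Q] (b : Bool) :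
    (((range (2*N)).filter (fun q => q.testBit 0 = b ∧ Q (q/2))).card)
      = ((range N).filter Q).card := by
  refine Finset.card_bij' (fun q _ => q / 2) (fun u _ => 2 * u + b.toNat) ?hi ?hj ?li ?ri
  case hi =>
    intro a ha
    rw [mem_filter, mem_range] at ha
    rw [mem_filter, mem_range]
    exact ⟨Nat.div_lt_of_lt_mul ha.1, ha.2.2⟩
  case hj =>
    intro u hu
    rw [mem_filter, mem_range] at hu
    rw [mem_filter, mem_range]
    have hu1 := hu.1
    have hdiv : (2 * u + b.toNat) / 2 = u := by cases b <;> simp <;> omega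
    refine ⟨by cases b <;> simp <;> omega, ?_, by rw [hdiv]; exact hu.2⟩
    rw [Nat.testBit_zero]
    cases b <;> simp <;> omega
  case li =>
    intro a ha
    rw [mem_filter, mem_range] at ha
    have hb := ha.2.1
    rw [Nat.testBit_zero] at hb
    show 2 * (a / 2) + b.toNat = a
    cases b <;> simp at hb ⊢ <;> omega
  case ri =>
    intro u hu
    rw [mem_filter, mem_range] at hu
    show (2 * u + b.toNat) / 2 = u
    cases b <;> simp <;> omega

private lemma doubleCount (N : ℕ) (Q : ℕ → Prop) [DecidablePred Q] :
    (((range (2*N)).filter (fun q => Q (q/2))).card) = 2 * ((range N).filter Q).card := by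
  classical
  have hsplit : (range (2*N)).filter (fun q => Q (q/2))
      = ((range (2*N)).filter (fun q => q.testBit 0 = true ∧ Q (q/2)))
        ∪ ((range (2*N)).filter (fun q => q.testBit 0 = false ∧ Q (q/2))) := by
    ext q
    simp only [mem_union, mem_filter]
    constructor
    · intro h; cases hq : q.testBit 0
      · exact Or.inr ⟨h.1, rfl, h.2⟩
      · exact Or.inl ⟨h.1, rfl, h.2⟩
    · rintro (⟨h1, _, h2⟩ | ⟨h1, _, h2⟩) <;> exact ⟨h1, h2⟩
  have hdisj : Disjoint ((range (2*N)).filter (fun q => q.testBit 0 = true ∧ Q (q/2)))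
      ((range (2*N)).filter (fun q => q.testBit 0 = false ∧ Q (q/2))) := by
    rw [Finset.disjoint_filter]
    rintro q _ ⟨h1, _⟩ ⟨h2, _⟩
    rw [h1] at h2; exact absurd h2 (by simp)
  rw [hsplit, Finset.card_union_of_disjoint hdisj, halfCount, halfCount]
  ring

private lemma bitCount : ∀ (p r L : ℕ) (w : ℕ → Bool), r + L ≤ p →
    (((range (2^p)).filter (fun q => ∀ k < L, q.testBit (r + k) = w k)).card) = 2^(p - L) := by
  intro p
  induction p with
  | zero =>
    intro r L w h
    have hL : L = 0 := by omega
    subst hL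
    simp
  | succ p ih =>
    intro r L w h
    match L with
    | 0 => simp
    | L + 1 =>
      have h2 : 2 ^ (p + 1) = 2 * 2 ^ p := by ring
      match r with
      | r + 1 =>
        calc ((range (2^(p+1))).filter (fun q => ∀ k < L + 1, q.testBit (r + 1 + k) = w k)).card
            = ((range (2 * 2^p)).filter (fun q => (∀ k < L + 1, (q/2).testBit (r + k) = w k))).card := by
              rw [h2]
              apply congrArg
              apply Finset.filter_congr
              intro q _
              constructor
              · intro hq k hk
                have := hq k hk
                rwa [show r + 1 + k = (r + k) + 1 from by ring, Nat.testBit_succ] at this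
              · intro hq k hk
                rw [show r + 1 + k = (r + k) + 1 from by ring, Nat.testBit_succ]
                exact hq k hk
          _ = 2 * ((range (2^p)).filter (fun q => ∀ k < L + 1, q.testBit (r + k) = w k)).card :=
              doubleCount (2^p) (fun u => ∀ k < L + 1, u.testBit (r + k) = w k)
          _ = 2 * 2^(p - (L+1)) := by rw [ih r (L+1) w (by omega)]
          _ = 2^(p + 1 - (L+1)) := by
              rw [← pow_succ']
              congr 1
              omega
      | 0 =>
        calc ((range (2^(p+1))).filter (fun q => ∀ k < L + 1, q.testBit (0 + k) = w k)).card
            = ((range (2 * 2^p)).filter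
                (fun q => q.testBit 0 = w 0 ∧ (∀ k < L, (q/2).testBit (0 + k) = w (k+1)))).card := by
              rw [h2]
              apply congrArg
              apply Finset.filter_congr
              intro q _
              constructor
              · intro hq
                refine ⟨by simpa using hq 0 (by omega), ?_⟩
                intro k hk
                have := hq (k+1) (by omega)
                rwa [show 0 + (k + 1) = (0 + k) + 1 from by ring, Nat.testBit_succ] at this
              · rintro ⟨h0, hrest⟩ k hk
                match k with
                | 0 => simpa using h0
                | k + 1 =>
                  rw [show 0 + (k + 1) = (0 + k) + 1 from by ring, Nat.testBit_succ]
                  exact hrest k (by omega)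
          _ = ((range (2^p)).filter (fun u => ∀ k < L, u.testBit (0 + k) = w (k+1))).card :=
              halfCount (2^p) (fun u => ∀ k < L, u.testBit (0 + k) = w (k+1)) (w 0)
          _ = 2^(p - L) := ih 0 L (fun k => w (k+1)) (by omega)
          _ = 2^(p + 1 - (L+1)) := by congr 1; omega

/-! ### The periodic patterns -/

private def per (p j : ℕ) : Bool := ((j % (p * 2^p)) / p).testBit (j % p)

private lemma per_period (p t : ℕ) : per p (t + p * 2^p) = per p t := by
  unfold per
  rw [Nat.add_mod_right, Nat.add_mul_mod_self_left]

private lemma per_eval {p q s : ℕ} (hq : q < 2^p) (hs : s < p) :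
    per p (q * p + s) = q.testBit s := by
  unfold per
  have h1 : q * p + s < p * 2^p := by
    calc q * p + s < (q + 1) * p := by nlinarith
    _ ≤ 2^p * p := Nat.mul_le_mul_right _ (by omega)
    _ = p * 2^p := by ring
  rw [Nat.mod_eq_of_lt h1]
  have h2 : (q * p + s) / p = q := by
    rw [Nat.mul_comm, Nat.mul_add_div (by omega : 0 < p), Nat.div_eq_of_lt hs]
    omega
  have h3 : (q * p + s) % p = s := by
    rw [add_comm, Nat.add_mul_mod_self_right, Nat.mod_eq_of_lt hs]
  rw [h2, h3]

private def perMatch (p L : ℕ) (w : ℕ → Bool) (j : ℕ) : Prop := ∀ k < L, per p (j + k) = w k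

private instance perMatch.dec (p L : ℕ) (w : ℕ → Bool) : DecidablePred (perMatch p L w) :=
  fun j => by unfold perMatch; infer_instance

private def cC (p L : ℕ) (w : ℕ → Bool) : ℕ := ((range (p * 2^p)).filter (perMatch p L w)).card

private lemma perMatch_period {p L : ℕ} {w : ℕ → Bool} {t : ℕ} :
    perMatch p L w (t + p * 2^p) ↔ perMatch p L w t := by
  unfold perMatch
  constructor <;> intro h k hk
  · have := h k hk
    rwa [show t + p * 2^p + k = (t + k) + p * 2^p from by ring, per_period] at this
  · rw [show t + p * 2^p + k = (t + k) + p * 2^p from by ring, per_period]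
    exact h k hk

private lemma perMatch_aligned {p L r q : ℕ} {w : ℕ → Bool} (hrL : r + L ≤ p)
    (hq : q < 2^p) :
    perMatch p L w (q * p + r) ↔ ∀ k < L, q.testBit (r + k) = w k := by
  unfold perMatch
  constructor <;> intro h k hk
  · have := h k hk
    rwa [show q * p + r + k = q * p + (r + k) from by ring,
      per_eval hq (by omega)] at this
  · rw [show q * p + r + k = q * p + (r + k) from by ring, per_eval hq (by omega)]
    exact h k hk

private def alignedT (p L r : ℕ) (w : ℕ → Bool) : Finset ℕ :=
  (((range (2^p)).filter (fun q => ∀ k < L, q.testBit (r + k) = w k)).image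
    (fun q => q * p + r))

private lemma alignedT_card {p L r : ℕ} {w : ℕ → Bool} (hp : 0 < p) (hrL : r + L ≤ p) :
    (alignedT p L r w).card = 2^(p - L) := by
  unfold alignedT
  rw [Finset.card_image_of_injective _
    (fun a b hab => Nat.eq_of_mul_eq_mul_right hp (by omega : a * p = b * p)),
    bitCount p r L w hrL]

private lemma alignedT_mod {p L r j : ℕ} {w : ℕ → Bool} (hr : r < p) (hj : j ∈ alignedT p L r w) :
    j % p = r := by
  unfold alignedT at hj
  obtain ⟨q, _, rfl⟩ := Finset.mem_image.mp hj
  rw [add_comm, Nat.add_mul_mod_self_right, Nat.mod_eq_of_lt hr]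

private lemma alignedT_subset {p L r : ℕ} {w : ℕ → Bool} (hrL : r + L ≤ p) (hr : r < p) :
    alignedT p L r w ⊆ (range (p * 2^p)).filter (perMatch p L w) := by
  intro j hj
  unfold alignedT at hj
  obtain ⟨q, hq, rfl⟩ := Finset.mem_image.mp hj
  rw [mem_filter, mem_range] at hq ⊢
  constructor
  · calc q * p + r < (q + 1) * p := by nlinarith [hq.1]
    _ ≤ 2^p * p := Nat.mul_le_mul_right _ (by omega)
    _ = p * 2^p := by ring
  · exact (perMatch_aligned hrL hq.1).mpr hq.2

private lemma cC_lower {p L : ℕ} {w : ℕ → Bool} (hL : 1 ≤ L) (hLp : L ≤ p) :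
    (p - L + 1) * 2^(p - L) ≤ cC p L w := by
  have hdisj : ∀ r1 ∈ range (p - L + 1), ∀ r2 ∈ range (p - L + 1), r1 ≠ r2 →
      Disjoint (alignedT p L r1 w) (alignedT p L r2 w) := by
    intro r1 h1 r2 h2 hne
    rw [mem_range] at h1 h2
    rw [Finset.disjoint_left]
    intro j hj1 hj2
    have := alignedT_mod (by omega) hj1
    have := alignedT_mod (by omega) hj2
    omega
  have hsub : (range (p - L + 1)).biUnion (fun r => alignedT p L r w)
      ⊆ (range (p * 2^p)).filter (perMatch p L w) := by
    intro j hj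
    rw [Finset.mem_biUnion] at hj
    obtain ⟨r, hr, hj⟩ := hj
    rw [mem_range] at hr
    exact alignedT_subset (by omega) (by omega) hj
  calc (p - L + 1) * 2^(p - L)
      = ∑ r ∈ range (p - L + 1), (alignedT p L r w).card := by
        rw [Finset.sum_congr rfl
          (fun r hr => alignedT_card (by omega) (by rw [mem_range] at hr; omega))]
        simp [mul_comm]
    _ = ((range (p - L + 1)).biUnion (fun r => alignedT p L r w)).card :=
        (Finset.card_biUnion hdisj).symm
    _ ≤ cC p L w := Finset.card_le_card hsub

private lemma badSet_card {p L : ℕ} (hL : 1 ≤ L) (hLp : L ≤ p) :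
    ((range (p * 2^p)).filter (fun j => p - L + 1 ≤ j % p)).card = (L - 1) * 2^p := by
  have hp : 0 < p := by omega
  have key : ((range (p * 2^p)).filter (fun j => p - L + 1 ≤ j % p)).card
      = ((range (2^p)) ×ˢ (Finset.Ico (p - L + 1) p)).card := by
    refine Finset.card_bij' (fun j _ => (j / p, j % p)) (fun u _ => u.1 * p + u.2) ?hi ?hj ?li ?ri
    case hi =>
      intro j hj
      rw [mem_filter, mem_range] at hj
      rw [Finset.mem_product, mem_range, Finset.mem_Ico]
      exact ⟨Nat.div_lt_of_lt_mul hj.1, hj.2, Nat.mod_lt _ hp⟩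
    case hj =>
      intro u hu
      rw [Finset.mem_product, mem_range, Finset.mem_Ico] at hu
      rw [mem_filter, mem_range]
      have h3 : (u.1 * p + u.2) % p = u.2 := by
        rw [add_comm, Nat.add_mul_mod_self_right, Nat.mod_eq_of_lt hu.2.2]
      constructor
      · calc u.1 * p + u.2 < (u.1 + 1) * p := by nlinarith [hu.2.2]
        _ ≤ 2^p * p := Nat.mul_le_mul_right _ (by omega)
        _ = p * 2^p := by ring
      · rw [h3]; exact hu.2.1
    case li =>
      intro j hj
      exact (Nat.div_add_mod' j p)
    case ri =>
      intro u hu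
      rw [Finset.mem_product, mem_range, Finset.mem_Ico] at hu
      have h2 : (u.1 * p + u.2) / p = u.1 := by
        rw [Nat.mul_comm, Nat.mul_add_div hp, Nat.div_eq_of_lt hu.2.2]; omega
      have h3 : (u.1 * p + u.2) % p = u.2 := by
        rw [add_comm, Nat.add_mul_mod_self_right, Nat.mod_eq_of_lt hu.2.2]
      rw [Prod.ext_iff]
      exact ⟨h2, h3⟩
  rw [key, Finset.card_product, card_range, Nat.card_Ico]
  have : p - (p - L + 1) = L - 1 := by omega
  rw [this, mul_comm]

private lemma cC_upper {p L : ℕ} {w : ℕ → Bool} (hL : 1 ≤ L) (hLp : L ≤ p) :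
    cC p L w ≤ (p - L + 1) * 2^(p - L) + (L - 1) * 2^p := by
  have hp : 0 < p := by omega
  have hsub : (range (p * 2^p)).filter (perMatch p L w)
      ⊆ ((range (p - L + 1)).biUnion (fun r => alignedT p L r w))
        ∪ ((range (p * 2^p)).filter (fun j => p - L + 1 ≤ j % p)) := by
    intro j hj
    rw [mem_filter, mem_range] at hj
    rw [Finset.mem_union]
    by_cases hr : j % p ≤ p - L
    · left
      rw [Finset.mem_biUnion]
      refine ⟨j % p, by rw [mem_range]; omega, ?_⟩
      unfold alignedT
      rw [Finset.mem_image]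
      have hq : j / p < 2^p := Nat.div_lt_of_lt_mul hj.1
      refine ⟨j / p, ?_, Nat.div_add_mod' j p⟩
      rw [mem_filter, mem_range]
      refine ⟨hq, ?_⟩
      have hple : j % p + L ≤ p := by omega
      refine (perMatch_aligned (w := w) hple hq).mp ?_
      rw [Nat.div_add_mod' j p]; exact hj.2
    · right
      rw [mem_filter, mem_range]
      exact ⟨hj.1, by omega⟩
  have hdisj : ∀ r1 ∈ range (p - L + 1), ∀ r2 ∈ range (p - L + 1), r1 ≠ r2 →
      Disjoint (alignedT p L r1 w) (alignedT p L r2 w) := by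
    intro r1 h1 r2 h2 hne
    rw [mem_range] at h1 h2
    rw [Finset.disjoint_left]
    intro j hj1 hj2
    have := alignedT_mod (by omega) hj1
    have := alignedT_mod (by omega) hj2
    omega
  calc cC p L w ≤ (((range (p - L + 1)).biUnion (fun r => alignedT p L r w))
        ∪ ((range (p * 2^p)).filter (fun j => p - L + 1 ≤ j % p))).card :=
      Finset.card_le_card hsub
    _ ≤ ((range (p - L + 1)).biUnion (fun r => alignedT p L r w)).card
        + ((range (p * 2^p)).filter (fun j => p - L + 1 ≤ j % p)).card :=
      Finset.card_union_le _ _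
    _ ≤ (p - L + 1) * 2^(p - L) + (L - 1) * 2^p := by
      rw [Finset.card_biUnion hdisj, badSet_card hL hLp]
      apply Nat.add_le_add_right
      apply le_of_eq
      calc ∑ r ∈ range (p - L + 1), (alignedT p L r w).card
          = ∑ r ∈ range (p - L + 1), 2^(p - L) := Finset.sum_congr rfl
            (fun r hr => alignedT_card hp (by rw [mem_range] at hr; omega))
        _ = (p - L + 1) * 2^(p - L) := by simp [mul_comm]

/-! ### Counting of a periodic predicate over an initial segment -/

private def Fc (P : ℕ → Prop) [DecidablePred P] (m : ℕ) : ℕ := ((range m).filter P).card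

section countF
variable (P : ℕ → Prop) [DecidablePred P]

private lemma Fc_succ (m : ℕ) : Fc P (m+1) = Fc P m + (if P m then 1 else 0) := by
  unfold Fc
  rw [Finset.range_add_one, Finset.filter_insert]
  by_cases h : P m
  · rw [if_pos h, if_pos h, Finset.card_insert_of_notMem (by simp)]
  · rw [if_neg h, if_neg h]
    omega

private lemma Fc_mono : Monotone (Fc P) := fun _ _ hab =>
  Finset.card_le_card (Finset.filter_subset_filter _ (Finset.range_subset_range.mpr hab))

variable {M : ℕ} (hM : 0 < M) (hper : ∀ t, P (t + M) ↔ P t)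

include hper in
private lemma Fc_add_period (m : ℕ) : Fc P (m + M) = Fc P m + Fc P M := by
  induction m with
  | zero => simp [Fc]
  | succ m ih =>
    have : m + 1 + M = (m + M) + 1 := by ring
    rw [this, Fc_succ, ih, Fc_succ]
    have : P (m + M) ↔ P m := hper m
    by_cases h : P m
    · rw [if_pos h, if_pos (this.mpr h)]; ring
    · rw [if_neg h, if_neg (fun hc => h (this.mp hc))]; ring

include hper in
private lemma Fc_mul (a : ℕ) : Fc P (a * M) = a * Fc P M := by
  induction a with
  | zero => simp [Fc]
  | succ a ih =>
    have : (a + 1) * M = a * M + M := by ring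
    rw [this, Fc_add_period P hper, ih]
    ring

include hM hper in
private lemma Fc_bounds (m : ℕ) :
    m / M * Fc P M ≤ Fc P m ∧ Fc P m ≤ m / M * Fc P M + Fc P M := by
  constructor
  · calc m / M * Fc P M = Fc P (m / M * M) := (Fc_mul P hper _).symm
    _ ≤ Fc P m := Fc_mono P (Nat.div_mul_le_self m M)
  · have h := Nat.div_add_mod m M
    have h2 : m % M < M := Nat.mod_lt _ hM
    calc Fc P m ≤ Fc P ((m / M + 1) * M) := Fc_mono P (by nlinarith)
      _ = m / M * Fc P M + Fc P M := by rw [Fc_mul P hper]; ring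

include hM hper in
private lemma Fc_est (m : ℕ) :
    m * Fc P M ≤ M * Fc P m + M * Fc P M ∧ M * Fc P m ≤ m * Fc P M + M * Fc P M := by
  obtain ⟨h1, h2⟩ := Fc_bounds P hM hper m
  have hdm := Nat.div_add_mod m M
  have hlt : m % M < M := Nat.mod_lt _ hM
  have e1 : M * (m / M) * Fc P M ≤ M * Fc P m := by
    calc M * (m / M) * Fc P M = M * (m / M * Fc P M) := by ring
      _ ≤ M * Fc P m := Nat.mul_le_mul_left M h1
  have e2 : m ≤ M * (m / M) + M := by omega
  have e4 : M * (m / M) ≤ m := by omega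
  constructor
  · calc m * Fc P M ≤ (M * (m / M) + M) * Fc P M := Nat.mul_le_mul_right _ e2
      _ = M * (m / M) * Fc P M + M * Fc P M := by ring
      _ ≤ M * Fc P m + M * Fc P M := by omega
  · calc M * Fc P m ≤ M * (m / M * Fc P M + Fc P M) := Nat.mul_le_mul_left M h2
      _ = M * (m / M) * Fc P M + M * Fc P M := by ring
      _ ≤ m * Fc P M + M * Fc P M := by
          have := Nat.mul_le_mul_right (Fc P M) e4
          omega

end countF

/-! ### The block structure -/

private def NB (p : ℕ) : ℕ := p * 2^p * 2^(p^3)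

private def stt : ℕ → ℕ
  | 0 => 0
  | p+1 => stt p + NB (p+1)

private lemma NB_pos {p : ℕ} (hp : 1 ≤ p) : 0 < NB p := by
  unfold NB
  positivity

private lemma stt_lt_succ (p : ℕ) : stt p < stt (p+1) := by
  have := NB_pos (p := p+1) (by omega)
  show stt p < stt p + NB (p+1)
  omega

private lemma stt_strictMono : StrictMono stt := strictMono_nat_of_lt_succ stt_lt_succ

private lemma le_stt (n : ℕ) : n ≤ stt n := by
  induction n with
  | zero => simp [stt]
  | succ n ih =>
    have := stt_lt_succ n
    omega

private def blk (n : ℕ) : ℕ := Nat.find (⟨n, le_stt n⟩ : ∃ p, n ≤ stt p)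

private lemma le_stt_blk (n : ℕ) : n ≤ stt (blk n) :=
  Nat.find_spec (⟨n, le_stt n⟩ : ∃ p, n ≤ stt p)

private lemma blk_le_iff {n p : ℕ} : blk n ≤ p ↔ n ≤ stt p := by
  constructor
  · intro h
    exact le_trans (le_stt_blk n) (stt_strictMono.monotone h)
  · intro h
    exact Nat.find_le h

private lemma blk_pos {n : ℕ} (hn : 1 ≤ n) : 1 ≤ blk n := by
  by_contra h
  push_neg at h
  interval_cases hb : blk n
  have := le_stt_blk n
  rw [hb] at this
  simp [stt] at this
  omega

private lemma stt_pred_lt {n : ℕ} (hn : 1 ≤ n) : stt (blk n - 1) < n := by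
  by_contra h
  push_neg at h
  have h2 := blk_le_iff.mpr h
  have := blk_pos hn
  omega

private lemma blk_eq {p n : ℕ} (hp : 1 ≤ p) (h1 : stt (p-1) < n) (h2 : n ≤ stt p) :
    blk n = p := by
  have hle : blk n ≤ p := blk_le_iff.mpr h2
  by_contra hne
  have : blk n ≤ p - 1 := by omega
  have := le_trans (le_stt_blk n) (stt_strictMono.monotone this)
  omega

/-- The sequence: on block `p` (positions `stt (p-1) + 1` to `stt p`) it repeats
the pattern of order `p`. -/
private def xx (n : ℕ) : Bool :=
  if n = 0 then false else per (blk n) (n - stt (blk n - 1) - 1)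

private lemma xx_eval {p n : ℕ} (hp : 1 ≤ p) (h1 : stt (p-1) < n) (h2 : n ≤ stt p) :
    xx n = per p (n - stt (p-1) - 1) := by
  have hn : ¬ (n = 0) := by omega
  unfold xx
  rw [if_neg hn, blk_eq hp h1 h2]

/-! ### Run-length bounds -/

private lemma per_aligned_parity {p s : ℕ} (hp : 1 ≤ p) (hs : s % p = 0) :
    per p s = decide ((s / p) % 2 = 1) := by
  unfold per
  rw [hs, Nat.testBit_zero, Nat.mod_mul_right_div_self]
  congr 1
  rw [Nat.mod_mod_of_dvd _ (dvd_pow_self 2 (by omega : p ≠ 0))]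

private lemma exists_zero {p : ℕ} (hp : 1 ≤ p) (t : ℕ) :
    ∃ d, d < 2*p ∧ per p (t + d) = false := by
  have hdm := Nat.div_add_mod t p
  have hmlt : t % p < p := Nat.mod_lt _ hp
  -- d0 such that (t + d0) % p = 0 and d0 < p
  obtain ⟨d0, hd0p, hs0⟩ : ∃ d0, d0 < p ∧ (t + d0) % p = 0 := by
    by_cases hr : t % p = 0
    · exact ⟨0, hp, by rw [Nat.add_zero]; exact hr⟩
    · refine ⟨p - t % p, by omega, ?_⟩
      have hmul : p * (t / p + 1) = p * (t / p) + p := by ring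
      have : t + (p - t % p) = p * (t / p + 1) := by omega
      rw [this, Nat.mul_mod_right]
  by_cases he : ((t + d0) / p) % 2 = 1
  · refine ⟨d0 + p, by omega, ?_⟩
    rw [show t + (d0 + p) = (t + d0) + p from by ring]
    have hs1 : ((t + d0) + p) % p = 0 := by
      rw [Nat.add_mod_right]; exact hs0
    rw [per_aligned_parity hp hs1]
    have : ((t + d0) + p) / p = (t + d0) / p + 1 := by
      rw [Nat.add_div_right _ (by omega : 0 < p)]
    rw [this]
    simp only [decide_eq_false_iff_not]
    omega
  · refine ⟨d0, by omega, ?_⟩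
    rw [per_aligned_parity hp hs0]
    simp only [decide_eq_false_iff_not]
    omega

private lemma xx_block_start (q : ℕ) : xx (stt q + 1) = false := by
  have h1 : stt (q + 1 - 1) < stt q + 1 := by
    simp
  have h2 : stt q + 1 ≤ stt (q+1) := stt_lt_succ q
  rw [xx_eval (by omega) h1 h2]
  have : stt q + 1 - stt (q + 1 - 1) - 1 = 0 := by simp
  rw [this]
  unfold per
  rcases Nat.eq_zero_or_pos ((q+1) * 2^(q+1)) with h | h
  · simp at h
  · rw [Nat.zero_mod, Nat.zero_div, Nat.zero_mod]
    simp [Nat.testBit_zero]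

private lemma run_bound {p n j i : ℕ} (hp : 1 ≤ p) (h2 : n ≤ stt p) (hij : i + j ≤ n)
    (hone : ∀ k, 1 ≤ k → k ≤ j → xx (i + k) = true) : j ≤ 2*p := by
  by_contra hj
  push_neg at hj
  have hi1 : 1 ≤ i + 1 := by omega
  set q := blk (i+1) with hq
  have hq1 : 1 ≤ q := blk_pos hi1
  have hqp : q ≤ p := by
    have h3 : i + 1 ≤ n := by omega
    exact blk_le_iff.mpr (le_trans h3 h2)
  have hile : i + 1 ≤ stt q := le_stt_blk (i+1)
  have hsp : stt (q-1) < i + 1 := stt_pred_lt hi1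
  by_cases hcase : i + j ≤ stt q
  · obtain ⟨d, hd, hdf⟩ := exists_zero hq1 (i - stt (q-1))
    have hk2 : d + 1 ≤ j := by omega
    have := hone (d+1) (by omega) hk2
    have he : xx (i + (d + 1)) = per q ((i - stt (q-1)) + d) := by
      rw [xx_eval hq1 (by omega) (by omega)]
      congr 1
      omega
    rw [he, hdf] at this
    exact Bool.false_ne_true this
  · push_neg at hcase
    have hk1 : 1 ≤ stt q + 1 - i := by omega
    have hk2 : stt q + 1 - i ≤ j := by omega
    have := hone _ hk1 hk2
    rw [show i + (stt q + 1 - i) = stt q + 1 from by omega, xx_block_start] at this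
    exact Bool.false_ne_true this

private lemma stt_ge_NB {q : ℕ} (hq : 1 ≤ q) : NB q ≤ stt q := by
  cases q with
  | zero => omega
  | succ q => show NB (q+1) ≤ stt q + NB (q+1); omega

private lemma NB_ge {q : ℕ} (hq : 1 ≤ q) : 2^(q^3) ≤ NB q := by
  unfold NB
  calc 2^(q^3) = 1 * 2^(q^3) := by ring
    _ ≤ (q * 2^q) * 2^(q^3) := by
        apply Nat.mul_le_mul_right
        have : 1 ≤ 2^q := Nat.one_le_two_pow
        nlinarith

/-! ### Occurrence counts for the sequence `xx` -/

private def MatchX (L : ℕ) (wf : ℕ → Bool) (i : ℕ) : Prop := ∀ k < L, xx (i + k) = wf k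

private instance MatchX.dec (L : ℕ) (wf : ℕ → Bool) : DecidablePred (MatchX L wf) :=
  fun i => by unfold MatchX; infer_instance

private def GX (L : ℕ) (wf : ℕ → Bool) (n : ℕ) : ℕ :=
  ((Finset.Ioc 0 n).filter (MatchX L wf)).card

private def Bcnt (L : ℕ) (wf : ℕ → Bool) (p m : ℕ) : ℕ :=
  ((Finset.Ioc (stt (p-1)) (stt (p-1) + m)).filter (MatchX L wf)).card

private lemma GX_split (L : ℕ) (wf : ℕ → Bool) {s n : ℕ} (h : s ≤ n) :
    GX L wf n = GX L wf s + ((Finset.Ioc s n).filter (MatchX L wf)).card := by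
  unfold GX
  rw [← Finset.Ioc_union_Ioc_eq_Ioc (Nat.zero_le s) h, Finset.filter_union,
    Finset.card_union_of_disjoint]
  apply Finset.disjoint_filter_filter
  rw [Finset.disjoint_left]
  intro a ha hb
  rw [Finset.mem_Ioc] at ha hb
  omega

private lemma stt_succ' {p : ℕ} (hp : 1 ≤ p) : stt p = stt (p-1) + NB p := by
  cases p with
  | zero => omega
  | succ q => rfl

private lemma match_equiv {L p i : ℕ} {wf : ℕ → Bool} (hp : 1 ≤ p)
    (h1 : stt (p-1) < i) (h2 : i + L ≤ stt p + 1) :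
    MatchX L wf i ↔ perMatch p L wf (i - stt (p-1) - 1) := by
  have hxk : ∀ k < L, xx (i + k) = per p ((i - stt (p-1) - 1) + k) := by
    intro k hk
    rw [xx_eval hp (by omega) (by omega : i + k ≤ stt p)]
    congr 1
    omega
  unfold MatchX perMatch
  constructor <;> intro h k hk
  · rw [← hxk k hk]; exact h k hk
  · rw [hxk k hk]; exact h k hk

private lemma interior_eq (L : ℕ) (wf : ℕ → Bool) {p m : ℕ} (hp : 1 ≤ p) (hm : m ≤ NB p) :
    ((Finset.Ioc (stt (p-1)) (stt (p-1) + m)).filter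
        (fun i => MatchX L wf i ∧ i + L ≤ stt p + 1)).card
      = ((Finset.range m).filter (fun t => perMatch p L wf t ∧ t + L ≤ NB p)).card := by
  have hsp := stt_succ' hp
  refine Finset.card_bij' (fun i _ => i - stt (p-1) - 1) (fun t _ => stt (p-1) + t + 1)
    ?hi ?hj ?li ?ri
  case hi =>
    intro i hi
    beta_reduce
    rw [Finset.mem_filter, Finset.mem_Ioc] at hi
    rw [Finset.mem_filter, Finset.mem_range]
    obtain ⟨⟨hi1, hi2⟩, hmt, hbd⟩ := hi
    refine ⟨by omega, ?_, by omega⟩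
    exact (match_equiv hp hi1 (by omega)).mp hmt
  case hj =>
    intro t ht
    beta_reduce
    rw [Finset.mem_filter, Finset.mem_range] at ht
    rw [Finset.mem_filter, Finset.mem_Ioc]
    obtain ⟨ht1, hmt, hbd⟩ := ht
    have he : stt (p-1) + t + 1 - stt (p-1) - 1 = t := by omega
    refine ⟨⟨by omega, by omega⟩, ?_, by omega⟩
    rw [match_equiv hp (by omega) (by omega), he]
    exact hmt
  case li =>
    intro i hi
    beta_reduce
    rw [Finset.mem_filter, Finset.mem_Ioc] at hi
    omega
  case ri =>
    intro t ht
    beta_reduce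
    omega

private lemma filter_and_bound_le {α : Type*} [DecidableEq α] (s : Finset α) (A B : α → Prop)
    [DecidablePred A] [DecidablePred B] :
    (s.filter A).card ≤ (s.filter (fun i => A i ∧ B i)).card
      + (s.filter (fun i => ¬ B i)).card := by
  calc (s.filter A).card
      ≤ ((s.filter (fun i => A i ∧ B i)) ∪ (s.filter (fun i => ¬ B i))).card := by
        apply Finset.card_le_card
        intro a ha
        rw [Finset.mem_filter] at ha
        rw [Finset.mem_union, Finset.mem_filter, Finset.mem_filter]
        by_cases hb : B a
        · exact Or.inl ⟨ha.1, ha.2, hb⟩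
        · exact Or.inr ⟨ha.1, hb⟩
    _ ≤ _ := Finset.card_union_le _ _

private lemma Bcnt_Fc (L : ℕ) (wf : ℕ → Bool) (hL : 1 ≤ L) {p m : ℕ}
    (hp : 1 ≤ p) (hm : m ≤ NB p) :
    Bcnt L wf p m ≤ Fc (perMatch p L wf) m + L
      ∧ Fc (perMatch p L wf) m ≤ Bcnt L wf p m + L := by
  have hsp := stt_succ' hp
  have hint := interior_eq L wf (p := p) hp hm
  -- edge counts
  have hedgeX : ((Finset.Ioc (stt (p-1)) (stt (p-1) + m)).filter
      (fun i => ¬ (i + L ≤ stt p + 1))).card ≤ L := by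
    calc ((Finset.Ioc (stt (p-1)) (stt (p-1) + m)).filter
        (fun i => ¬ (i + L ≤ stt p + 1))).card
        ≤ (Finset.Ico (stt p + 2 - L) (stt (p-1) + m + 1)).card := by
          apply Finset.card_le_card
          intro i hi
          rw [Finset.mem_filter, Finset.mem_Ioc] at hi
          rw [Finset.mem_Ico]
          omega
      _ ≤ L := by
          rw [Nat.card_Ico]
          omega
  have hedgeT : ((Finset.range m).filter (fun t => ¬ (t + L ≤ NB p))).card ≤ L := by
    calc ((Finset.range m).filter (fun t => ¬ (t + L ≤ NB p))).card
        ≤ (Finset.Ico (NB p + 1 - L) m).card := by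
          apply Finset.card_le_card
          intro t ht
          rw [Finset.mem_filter, Finset.mem_range] at ht
          rw [Finset.mem_Ico]
          omega
      _ ≤ L := by
          rw [Nat.card_Ico]
          omega
  have hsubX : ((Finset.Ioc (stt (p-1)) (stt (p-1) + m)).filter
      (fun i => MatchX L wf i ∧ i + L ≤ stt p + 1)).card ≤ Bcnt L wf p m := by
    apply Finset.card_le_card
    apply Finset.monotone_filter_right
    intro i _ hi
    exact hi.1
  have hsubT : ((Finset.range m).filter (fun t => perMatch p L wf t ∧ t + L ≤ NB p)).card
      ≤ Fc (perMatch p L wf) m := by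
    apply Finset.card_le_card
    apply Finset.monotone_filter_right
    intro t _ ht
    exact ht.1
  constructor
  · calc Bcnt L wf p m
        ≤ ((Finset.Ioc (stt (p-1)) (stt (p-1) + m)).filter
            (fun i => MatchX L wf i ∧ i + L ≤ stt p + 1)).card
          + ((Finset.Ioc (stt (p-1)) (stt (p-1) + m)).filter
            (fun i => ¬ (i + L ≤ stt p + 1))).card :=
          filter_and_bound_le _ _ _
      _ ≤ Fc (perMatch p L wf) m + L := by
          rw [hint]
          exact Nat.add_le_add hsubT hedgeX
  · calc Fc (perMatch p L wf) m
        ≤ ((Finset.range m).filter (fun t => perMatch p L wf t ∧ t + L ≤ NB p)).card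
          + ((Finset.range m).filter (fun t => ¬ (t + L ≤ NB p))).card :=
          filter_and_bound_le _ _ _
      _ ≤ Bcnt L wf p m + L := by
          rw [← hint]
          exact Nat.add_le_add hsubX hedgeT

/-! ### Real estimates -/

private lemma cC_ratio {p L : ℕ} {wf : ℕ → Bool} (hL : 1 ≤ L) (hLp : L ≤ p) :
    |(cC p L wf : ℝ)/((p * 2^p : ℕ) : ℝ) - 1/2^L| ≤ (L : ℝ)/(p : ℝ) := by
  have hppos : (0:ℝ) < p := by exact_mod_cast (by omega : 0 < p)
  have h2L : (0:ℝ) < 2^L := by positivity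
  have h2pL : (0:ℝ) < (2:ℝ)^(p - L) := by positivity
  have hsplit : (2:ℝ)^p = 2^L * 2^(p-L) := by
    rw [← pow_add]
    congr 1
    omega
  have hMval : (((p * 2^p : ℕ)) : ℝ) = p * 2^p := by push_cast; ring
  have hMpos : (0:ℝ) < ((p * 2^p : ℕ) : ℝ) := by
    rw [hMval]; positivity
  have hcastL : ((p - L + 1 : ℕ) : ℝ) = (p:ℝ) - L + 1 := by
    push_cast [Nat.cast_sub hLp]; ring
  have hcastl : ((L - 1 : ℕ) : ℝ) = (L:ℝ) - 1 := by
    push_cast [Nat.cast_sub hL]; ring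
  have hcU : (cC p L wf : ℝ) ≤ ((p:ℝ) - L + 1) * 2^(p-L) + ((L:ℝ) - 1) * 2^p := by
    have := cC_upper (w := wf) hL hLp
    have hcast : (cC p L wf : ℝ) ≤ (((p - L + 1) * 2^(p - L) + (L - 1) * 2^p : ℕ) : ℝ) := by
      exact_mod_cast this
    rw [Nat.cast_add, Nat.cast_mul, Nat.cast_mul, hcastL, hcastl] at hcast
    push_cast at hcast
    exact hcast
  have hcL : ((p:ℝ) - L + 1) * 2^(p-L) ≤ (cC p L wf : ℝ) := by
    have := cC_lower (w := wf) hL hLp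
    have hcast : (((p - L + 1) * 2^(p - L) : ℕ) : ℝ) ≤ (cC p L wf : ℝ) := by
      exact_mod_cast this
    rw [Nat.cast_mul, hcastL] at hcast
    push_cast at hcast
    exact hcast
  rw [abs_le]
  have hLr : (1:ℝ) ≤ L := by exact_mod_cast hL
  have hLpr : (L:ℝ) ≤ p := by exact_mod_cast hLp
  have hple : (2:ℝ)^(p-L) ≤ 2^p := by
    apply pow_le_pow_right₀ (by norm_num)
    omega
  constructor
  · have key : (1:ℝ)/2^L - (L:ℝ)/(p:ℝ) ≤ (cC p L wf : ℝ)/((p * 2^p : ℕ) : ℝ) := by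
      rw [le_div_iff₀ hMpos, hMval]
      have hexp : ((1:ℝ)/2^L - (L:ℝ)/(p:ℝ)) * ((p:ℝ) * 2^p)
          = (p:ℝ) * 2^(p-L) - (L:ℝ) * 2^p := by
        rw [hsplit]; field_simp
      rw [hexp]
      nlinarith
    linarith
  · have key : (cC p L wf : ℝ)/((p * 2^p : ℕ) : ℝ) ≤ 1/2^L + (L:ℝ)/(p:ℝ) := by
      rw [div_le_iff₀ hMpos, hMval]
      have hexp : ((1:ℝ)/2^L + (L:ℝ)/(p:ℝ)) * ((p:ℝ) * 2^p)
          = (p:ℝ) * 2^(p-L) + (L:ℝ) * 2^p := by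
        rw [hsplit]; field_simp
      rw [hexp]
      nlinarith
    linarith

private noncomputable def eC (L p : ℕ) : ℝ := if p < L then 1 else (L:ℝ)/(p:ℝ)

private lemma eC_nonneg (L p : ℕ) : 0 ≤ eC L p := by
  unfold eC
  split <;> positivity

private lemma eC_le_one {L p : ℕ} (hp : 1 ≤ p) : eC L p ≤ 1 := by
  unfold eC
  split
  · exact le_refl 1
  · rename_i h
    push_neg at h
    rw [div_le_one (by exact_mod_cast (by omega : 0 < p))]
    exact_mod_cast h

private lemma one_le_two_pow_real (L : ℕ) : (1:ℝ) ≤ 2^L := by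
  calc (1:ℝ) = 1^L := (one_pow L).symm
    _ ≤ 2^L := pow_le_pow_left₀ (by norm_num) (by norm_num) L

private lemma block_est (L : ℕ) (wf : ℕ → Bool) (hL : 1 ≤ L) {p m : ℕ}
    (hp : 1 ≤ p) (hm : m ≤ NB p) :
    |(Bcnt L wf p m : ℝ) - m * (1/2^L)| ≤ eC L p * m + ((cC p L wf : ℝ) + 2*L) := by
  have h2L : (0:ℝ) < 2^L := by positivity
  have hθ1 : (1:ℝ)/2^L ≤ 1 := by
    rw [div_le_one h2L]
    exact one_le_two_pow_real L
  have hθ0 : (0:ℝ) ≤ 1/2^L := by positivity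
  have hmB : (Bcnt L wf p m : ℝ) ≤ m := by
    have : Bcnt L wf p m ≤ m := by
      unfold Bcnt
      calc ((Finset.Ioc (stt (p-1)) (stt (p-1) + m)).filter (MatchX L wf)).card
          ≤ (Finset.Ioc (stt (p-1)) (stt (p-1) + m)).card := Finset.card_filter_le _ _
        _ = m := by rw [Nat.card_Ioc]; omega
    exact_mod_cast this
  have hm0 : (0:ℝ) ≤ (m:ℝ) := by positivity
  have hB0 : (0:ℝ) ≤ (Bcnt L wf p m : ℝ) := by positivity
  have hc0 : (0:ℝ) ≤ (cC p L wf : ℝ) := by positivity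
  have hL0 : (0:ℝ) ≤ (L:ℝ) := by positivity
  by_cases hcp : p < L
  · -- crude bound
    have heC : eC L p = 1 := if_pos hcp
    rw [heC]
    have h1 : |(Bcnt L wf p m : ℝ) - m * (1/2^L)| ≤ m := by
      rw [abs_le]
      constructor
      · nlinarith
      · nlinarith
    nlinarith
  · push_neg at hcp  -- L ≤ p
    have heC : eC L p = (L:ℝ)/(p:ℝ) := if_neg (by omega)
    have hppos : (0:ℝ) < p := by exact_mod_cast (by omega : 0 < p)
    set Mn := p * 2^p with hMn
    have hMpos : 0 < Mn := by
      have : 0 < 2^p := Nat.two_pow_pos p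
      positivity
    have hMrpos : (0:ℝ) < (Mn:ℝ) := by exact_mod_cast hMpos
    have hper : ∀ t, perMatch p L wf (t + Mn) ↔ perMatch p L wf t := fun t => perMatch_period
    set F := Fc (perMatch p L wf) m with hF
    set B := Bcnt L wf p m with hBdef
    set c := cC p L wf with hc
    have hFcM : Fc (perMatch p L wf) Mn = c := rfl
    obtain ⟨hest1, hest2⟩ := Fc_est (perMatch p L wf) hMpos hper m
    rw [hFcM] at hest1 hest2
    obtain ⟨hbf1, hbf2⟩ := Bcnt_Fc L wf hL hp hm
    have hA : |(B:ℝ) - F| ≤ L := by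
      rw [abs_le]
      constructor
      · have : (F:ℝ) ≤ B + L := by exact_mod_cast hbf2
        linarith
      · have : (B:ℝ) ≤ F + L := by exact_mod_cast hbf1
        linarith
    have hMF : |(Mn:ℝ)*F - m*c| ≤ (Mn:ℝ)*c := by
      rw [abs_le]
      constructor
      · have : (m:ℝ)*c ≤ Mn*F + Mn*c := by exact_mod_cast hest1
        linarith
      · have : (Mn:ℝ)*F ≤ m*c + Mn*c := by exact_mod_cast hest2
        linarith
    have hBq : |(F:ℝ) - m*((c:ℝ)/(Mn:ℝ))| ≤ c := by
      have heq : (F:ℝ) - m*((c:ℝ)/(Mn:ℝ)) = ((Mn:ℝ)*F - m*c)/(Mn:ℝ) := by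
        field_simp
      rw [heq, abs_div, abs_of_pos hMrpos, div_le_iff₀ hMrpos]
      calc |(Mn:ℝ)*F - m*c| ≤ (Mn:ℝ)*c := hMF
        _ = c * Mn := by ring
    have hC : |(c:ℝ)/(Mn:ℝ) - 1/2^L| ≤ (L:ℝ)/(p:ℝ) := cC_ratio hL hcp
    have hmC : |(m:ℝ)*((c:ℝ)/(Mn:ℝ)) - m * (1/2^L)| ≤ m * ((L:ℝ)/(p:ℝ)) := by
      rw [← mul_sub, abs_mul, abs_of_nonneg hm0]
      exact mul_le_mul_of_nonneg_left hC hm0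
    have t1 : |(B:ℝ) - m * (1/2^L)| ≤ |(B:ℝ) - F| + |(F:ℝ) - m * (1/2^L)| :=
      abs_sub_le _ _ _
    have t2 : |(F:ℝ) - m * (1/2^L)|
        ≤ |(F:ℝ) - m*((c:ℝ)/(Mn:ℝ))| + |(m:ℝ)*((c:ℝ)/(Mn:ℝ)) - m * (1/2^L)| :=
      abs_sub_le _ _ _
    rw [heC]
    have : (L:ℝ)/(p:ℝ) * m = m * ((L:ℝ)/(p:ℝ)) := by ring
    rw [this]
    linarith

private noncomputable def Esum (L : ℕ) (wf : ℕ → Bool) (p : ℕ) : ℝ :=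
  ∑ q ∈ Finset.Icc 1 p, (eC L q * NB q + ((cC q L wf : ℝ) + 2*L))

private lemma GX_stt_est (L : ℕ) (wf : ℕ → Bool) (hL : 1 ≤ L) :
    ∀ p, |(GX L wf (stt p) : ℝ) - (stt p : ℝ) * (1/2^L)| ≤ Esum L wf p := by
  intro p
  induction p with
  | zero =>
    simp [GX, stt, Esum]
  | succ p ih =>
    have hsplit := GX_split L wf (s := stt p) (n := stt (p+1)) (le_of_lt (stt_lt_succ p))
    have hBc : ((Finset.Ioc (stt p) (stt (p+1))).filter (MatchX L wf)).card
        = Bcnt L wf (p+1) (NB (p+1)) := by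
      unfold Bcnt
      congr 1
    rw [hBc] at hsplit
    have hblock := block_est L wf hL (p := p+1) (m := NB (p+1)) (by omega) (le_refl _)
    have hs : (stt (p+1) : ℝ) = (stt p : ℝ) + (NB (p+1) : ℝ) := by
      rw [stt_succ' (by omega : 1 ≤ p+1)]
      push_cast
      simp
    have hEs : Esum L wf (p+1) = Esum L wf p
        + (eC L (p+1) * NB (p+1) + ((cC (p+1) L wf : ℝ) + 2*L)) := by
      unfold Esum
      rw [← Finset.sum_Icc_succ_top (by omega : 1 ≤ p+1)]
    rw [hsplit, hEs, hs]
    push_cast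
    have habs := abs_add_le ((GX L wf (stt p) : ℝ) - (stt p : ℝ) * (1/2^L))
      ((Bcnt L wf (p+1) (NB (p+1)) : ℝ) - (NB (p+1) : ℝ) * (1/2^L))
    have heq : ((GX L wf (stt p) : ℝ) - (stt p : ℝ) * (1/2^L))
        + ((Bcnt L wf (p+1) (NB (p+1)) : ℝ) - (NB (p+1) : ℝ) * (1/2^L))
        = ((GX L wf (stt p) : ℝ) + (Bcnt L wf (p+1) (NB (p+1)) : ℝ))
          - ((stt p : ℝ) + (NB (p+1) : ℝ)) * (1/2^L) := by ring
    rw [heq] at habs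
    linarith

private lemma stt_sum : ∀ j, ∑ q ∈ Finset.Icc 1 j, NB q = stt j := by
  intro j
  induction j with
  | zero => simp [stt]
  | succ j ih =>
    rw [Finset.sum_Icc_succ_top (by omega : 1 ≤ j+1), ih]
    rfl

set_option maxHeartbeats 2000000 in
private lemma normal_xx : ∀ w : List Bool, w ≠ [] →
    Filter.Tendsto (fun n : ℕ =>
        (((Finset.Ioc 0 n).filter (MatchX w.length (fun k => w.getD k false))).card : ℝ) / (n : ℝ))
      Filter.atTop (nhds (1 / 2 ^ w.length)) := by
  intro w hw
  have hL : 1 ≤ w.length := List.length_pos_iff.mpr hw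
  set L := w.length with hLdef
  set wf : ℕ → Bool := fun k => w.getD k false with hwf
  rw [Metric.tendsto_atTop]
  intro ε hε
  set εq := ε/5 with hεqdef
  have hεqpos : 0 < εq := by positivity
  obtain ⟨s, hs⟩ : ∃ s : ℕ, ((1:ℝ)/2)^s < εq :=
    exists_pow_lt_of_lt_one hεqpos (by norm_num)
  obtain ⟨P0, hP0⟩ : ∃ P0 : ℕ, (L:ℝ)/εq < P0 := exists_nat_gt _
  set P := L + P0 + s + 12 with hPdef
  have hLq : ∀ q : ℕ, P ≤ q → (L:ℝ)/(q:ℝ) ≤ εq := by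
    intro q hq
    have hq0 : (0:ℝ) < q := by
      have : 1 ≤ q := by omega
      exact_mod_cast this
    rw [div_le_iff₀ hq0]
    have h1 : (L:ℝ) < εq * P0 := by
      rw [div_lt_iff₀ hεqpos] at hP0
      linarith
    have h2 : (P0:ℝ) ≤ q := by
      have : P0 ≤ q := by omega
      exact_mod_cast this
    calc (L:ℝ) ≤ εq * P0 := h1.le
      _ ≤ εq * q := mul_le_mul_of_nonneg_left h2 hεqpos.le
  obtain ⟨n1, hn1⟩ : ∃ n1 : ℕ, (stt P : ℝ)/εq < n1 := exists_nat_gt _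
  refine ⟨max (stt P + 1) n1, fun n hn => ?_⟩
  have hn2 : stt P + 1 ≤ n := le_trans (le_max_left _ _) hn
  have hn3 : n1 ≤ n := le_trans (le_max_right _ _) hn
  have hn4 : 1 ≤ n := by omega
  have hK0 : (stt P : ℝ) ≤ εq * n := by
    rw [div_lt_iff₀ hεqpos] at hn1
    have h6 : (n1:ℝ) ≤ n := by exact_mod_cast hn3
    calc (stt P : ℝ) ≤ (n1:ℝ) * εq := hn1.le
      _ ≤ (n:ℝ) * εq := mul_le_mul_of_nonneg_right h6 hεqpos.le
      _ = εq * n := mul_comm _ _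
  set p := blk n with hpdef
  have hpP : P + 1 ≤ p := by
    by_contra hc
    push_neg at hc
    have : blk n ≤ P := by omega
    rw [blk_le_iff] at this
    omega
  have hp1 : 1 ≤ p := by omega
  have hLp : L + 1 ≤ p := by omega
  have hplo : stt (p-1) < n := stt_pred_lt hn4
  have hphi : n ≤ stt p := le_stt_blk n
  set m := n - stt (p-1) with hmdef
  have hsp := stt_succ' hp1
  have hmN : m ≤ NB p := by omega
  have hnm : n = stt (p-1) + m := by omega
  -- decomposition
  have hdec : GX L wf n = GX L wf (stt (p-1)) + Bcnt L wf p m := by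
    have h1 := GX_split L wf (s := stt (p-1)) (n := n) (by omega)
    have hIoc : Finset.Ioc (stt (p-1)) n = Finset.Ioc (stt (p-1)) (stt (p-1) + m) := by
      rw [← hnm]
    unfold Bcnt
    rw [h1, hIoc]
  have hind := GX_stt_est L wf hL (p-1)
  have hblock := block_est L wf hL hp1 hmN
  -- bound on the eC * NB part of Esum
  have hsum_split : Esum L wf (p-1)
      = (∑ q ∈ Finset.Icc 1 (p-1), eC L q * NB q)
        + (∑ q ∈ Finset.Icc 1 (p-1), ((cC q L wf : ℝ) + 2*L)) := by
    unfold Esum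
    rw [Finset.sum_add_distrib]
  have hsttsumR : ∀ j, (∑ q ∈ Finset.Icc 1 j, (NB q : ℝ)) = stt j := by
    intro j
    rw [← Nat.cast_sum, stt_sum]
  have hE1 : (∑ q ∈ Finset.Icc 1 (p-1), eC L q * NB q)
      ≤ (stt P : ℝ) + εq * stt (p-1) := by
    calc (∑ q ∈ Finset.Icc 1 (p-1), eC L q * NB q)
        ≤ ∑ q ∈ Finset.Icc 1 (p-1),
            ((if q ≤ P then (NB q : ℝ) else 0) + εq * NB q) := by
          apply Finset.sum_le_sum
          intro q hq
          rw [Finset.mem_Icc] at hq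
          have hq1 : 1 ≤ q := hq.1
          have hNB0 : (0:ℝ) ≤ (NB q : ℝ) := by positivity
          by_cases hqP : q ≤ P
          · rw [if_pos hqP]
            have h1 := eC_le_one (L := L) hq1
            have h2 : eC L q * NB q ≤ 1 * NB q := mul_le_mul_of_nonneg_right h1 hNB0
            have h3 : (0:ℝ) ≤ εq * NB q := by positivity
            linarith
          · rw [if_neg hqP]
            have heCq : eC L q = (L:ℝ)/(q:ℝ) := if_neg (by omega)
            rw [heCq]
            have h1 := hLq q (by omega)
            have h2 : (L:ℝ)/(q:ℝ) * NB q ≤ εq * NB q := mul_le_mul_of_nonneg_right h1 hNB0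
            linarith
      _ = (∑ q ∈ Finset.Icc 1 (p-1), (if q ≤ P then (NB q : ℝ) else 0))
          + εq * (∑ q ∈ Finset.Icc 1 (p-1), (NB q : ℝ)) := by
          rw [Finset.sum_add_distrib, Finset.mul_sum]
      _ ≤ (stt P : ℝ) + εq * stt (p-1) := by
          have ha : (∑ q ∈ Finset.Icc 1 (p-1), (if q ≤ P then (NB q : ℝ) else 0))
              ≤ (stt P : ℝ) := by
            rw [← Finset.sum_filter]
            have hfe : (Finset.Icc 1 (p-1)).filter (fun q => q ≤ P)
                = Finset.Icc 1 (min (p-1) P) := by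
              ext q
              simp only [Finset.mem_filter, Finset.mem_Icc, le_min_iff]
              omega
            rw [hfe, hsttsumR]
            have : stt (min (p-1) P) ≤ stt P := stt_strictMono.monotone (min_le_right _ _)
            exact_mod_cast this
          rw [hsttsumR]
          linarith
  -- bound on the constants part
  have hE2n : (∑ q ∈ Finset.Icc 1 p, (cC q L wf + 2*L)) ≤ p * (p*2^p + 2*L) := by
    have hcard : (Finset.Icc 1 p).card = p := by
      rw [Nat.card_Icc]
      omega
    calc (∑ q ∈ Finset.Icc 1 p, (cC q L wf + 2*L))
        ≤ (Finset.Icc 1 p).card • (p*2^p + 2*L) := by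
          apply Finset.sum_le_card_nsmul
          intro q hq
          rw [Finset.mem_Icc] at hq
          have h1 : cC q L wf ≤ q * 2^q := by
            unfold cC
            calc ((Finset.range (q * 2^q)).filter (perMatch q L wf)).card
                ≤ (Finset.range (q * 2^q)).card := Finset.card_filter_le _ _
              _ = q * 2^q := Finset.card_range _
          have h2 : q * 2^q ≤ p * 2^p :=
            Nat.mul_le_mul hq.2 (Nat.pow_le_pow_right (by norm_num) hq.2)
          omega
      _ = p * (p*2^p + 2*L) := by rw [hcard, smul_eq_mul]
  have hE3n : p * (p*2^p + 2*L) ≤ 2^(4*p) := by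
    have e1 : p ≤ 2^p := (Nat.lt_two_pow_self (n := p)).le
    have e2 : 2*L ≤ 2^p := by
      have h1 : L < 2^L := Nat.lt_two_pow_self (n := L)
      have h2 : 2*L ≤ 2^(L+1) := by
        rw [pow_succ]
        omega
      have h3 : (2:ℕ)^(L+1) ≤ 2^p := Nat.pow_le_pow_right (by norm_num) (by omega)
      omega
    have h3 : p * (p*2^p + 2*L) ≤ 2^p * (2^p * 2^p + 2^p) :=
      Nat.mul_le_mul e1 (Nat.add_le_add (Nat.mul_le_mul_right _ e1) e2)
    have h4 : 2^p * (2^p * 2^p + 2^p) = 2^(p+p+p) + 2^(p+p) := by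
      simp only [pow_add]
      ring
    have h5 : (2:ℕ)^(p+p) ≤ 2^(p+p+p) := Nat.pow_le_pow_right (by norm_num) (by omega)
    have h6 : (2:ℕ)^(p+p+p) + 2^(p+p+p) = 2^(p+p+p+1) := by
      rw [pow_succ]
      ring
    have h7 : (2:ℕ)^(p+p+p+1) ≤ 2^(4*p) := Nat.pow_le_pow_right (by norm_num) (by omega)
    omega
  have hexp : 4*p + s ≤ (p-1)^3 := by
    set a := p - 1 with hadef
    have ha : s + 12 ≤ a := by omega
    have h12 : 12 ≤ a := by omega
    have m1 : 12*a ≤ a*a := Nat.mul_le_mul_right a h12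
    have m2 : 12*(a*a) ≤ a*(a*a) := Nat.mul_le_mul_right (a*a) h12
    have hcube : a^3 = a*(a*a) := by ring
    have hp4 : 4*p = 4*a + 4 := by omega
    omega
  have hn5 : (2:ℝ)^((p-1)^3) ≤ (n:ℝ) := by
    have h1 : 2^((p-1)^3) ≤ NB (p-1) := NB_ge (by omega)
    have h2 : NB (p-1) ≤ stt (p-1) := stt_ge_NB (by omega)
    have h3 : (2:ℕ)^((p-1)^3) ≤ n := by omega
    exact_mod_cast h3
  have hE2 : ((p * (p*2^p + 2*L) : ℕ) : ℝ) ≤ εq * n := by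
    have hc1 : ((p * (p*2^p + 2*L) : ℕ) : ℝ) ≤ ((2^(4*p) : ℕ) : ℝ) := by
      exact_mod_cast hE3n
    have hc2 : ((2^(4*p) : ℕ) : ℝ) = (2:ℝ)^(4*p) := by push_cast; ring
    have hpow : (2:ℝ)^(4*p) * 2^s ≤ 2^((p-1)^3) := by
      rw [← pow_add]
      exact pow_le_pow_right₀ (by norm_num) hexp
    have h2s : (0:ℝ) < 2^s := by positivity
    calc ((p * (p*2^p + 2*L) : ℕ) : ℝ) ≤ (2:ℝ)^(4*p) := by rw [← hc2]; exact hc1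
      _ = (2^(4*p) * 2^s) * ((1:ℝ)/2)^s := by
          rw [one_div_pow]
          field_simp
      _ ≤ 2^((p-1)^3) * ((1:ℝ)/2)^s := by
          apply mul_le_mul_of_nonneg_right hpow
          positivity
      _ ≤ (n:ℝ) * εq := by
          apply mul_le_mul hn5 hs.le (by positivity) (by positivity)
      _ = εq * n := mul_comm _ _
  have hεm : eC L p * m ≤ εq * n := by
    have heCp : eC L p = (L:ℝ)/(p:ℝ) := if_neg (by omega)
    rw [heCp]
    have h1 : (L:ℝ)/(p:ℝ) ≤ εq := hLq p (by omega)
    have h2 : (m:ℝ) ≤ n := by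
      have : m ≤ n := by omega
      exact_mod_cast this
    have h3 : (0:ℝ) ≤ (m:ℝ) := by positivity
    exact mul_le_mul h1 h2 h3 hεqpos.le
  -- assemble
  have hccsum : (∑ q ∈ Finset.Icc 1 (p-1), ((cC q L wf : ℝ) + 2*L))
      + ((cC p L wf : ℝ) + 2*L) = ∑ q ∈ Finset.Icc 1 p, ((cC q L wf : ℝ) + 2*L) := by
    have : p = (p-1) + 1 := by omega
    rw [this, Finset.sum_Icc_succ_top (by omega : 1 ≤ (p-1)+1)]
    congr 2 <;> omega
  have hccsumR : (∑ q ∈ Finset.Icc 1 p, ((cC q L wf : ℝ) + 2*L))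
      = ((∑ q ∈ Finset.Icc 1 p, (cC q L wf + 2*L) : ℕ) : ℝ) := by
    rw [Nat.cast_sum]
    apply Finset.sum_congr rfl
    intro q _
    push_cast
    ring
  have hmain : |(GX L wf n : ℝ) - (n:ℝ) * (1/2^L)| ≤ 4 * (εq * n) := by
    have hsplitabs : |(GX L wf n : ℝ) - (n:ℝ) * (1/2^L)|
        ≤ |(GX L wf (stt (p-1)) : ℝ) - (stt (p-1) : ℝ) * (1/2^L)|
          + |(Bcnt L wf p m : ℝ) - (m:ℝ) * (1/2^L)| := by
      have h1 : (GX L wf n : ℝ) = (GX L wf (stt (p-1)) : ℝ) + (Bcnt L wf p m : ℝ) := by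
        exact_mod_cast congrArg (Nat.cast (R := ℝ)) hdec
      have h2 : (n:ℝ) = (stt (p-1) : ℝ) + (m:ℝ) := by
        exact_mod_cast congrArg (Nat.cast (R := ℝ)) hnm
      rw [h1, h2]
      have := abs_add_le ((GX L wf (stt (p-1)) : ℝ) - (stt (p-1) : ℝ) * (1/2^L))
        ((Bcnt L wf p m : ℝ) - (m:ℝ) * (1/2^L))
      calc |(GX L wf (stt (p-1)) : ℝ) + (Bcnt L wf p m : ℝ)
          - ((stt (p-1) : ℝ) + (m:ℝ)) * (1/2^L)|
          = |((GX L wf (stt (p-1)) : ℝ) - (stt (p-1) : ℝ) * (1/2^L))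
            + ((Bcnt L wf p m : ℝ) - (m:ℝ) * (1/2^L))| := by ring_nf
        _ ≤ _ := this
    have hsttpn : (stt (p-1) : ℝ) ≤ n := by
      have : stt (p-1) ≤ n := by omega
      exact_mod_cast this
    have hccbound : (∑ q ∈ Finset.Icc 1 p, ((cC q L wf : ℝ) + 2*L)) ≤ εq * n := by
      rw [hccsumR]
      calc ((∑ q ∈ Finset.Icc 1 p, (cC q L wf + 2*L) : ℕ) : ℝ)
          ≤ ((p * (p*2^p + 2*L) : ℕ) : ℝ) := by exact_mod_cast hE2n
        _ ≤ εq * n := hE2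
    calc |(GX L wf n : ℝ) - (n:ℝ) * (1/2^L)|
        ≤ |(GX L wf (stt (p-1)) : ℝ) - (stt (p-1) : ℝ) * (1/2^L)|
          + |(Bcnt L wf p m : ℝ) - (m:ℝ) * (1/2^L)| := hsplitabs
      _ ≤ Esum L wf (p-1) + (eC L p * m + ((cC p L wf : ℝ) + 2*L)) := by
          linarith
      _ ≤ ((stt P : ℝ) + εq * stt (p-1))
          + (∑ q ∈ Finset.Icc 1 (p-1), ((cC q L wf : ℝ) + 2*L))
          + (eC L p * m + ((cC p L wf : ℝ) + 2*L)) := by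
          rw [hsum_split]
          linarith
      _ ≤ (εq * n + εq * n) + (∑ q ∈ Finset.Icc 1 p, ((cC q L wf : ℝ) + 2*L))
          + εq * n := by
          have : εq * stt (p-1) ≤ εq * n := mul_le_mul_of_nonneg_left hsttpn hεqpos.le
          linarith [hccsum]
      _ ≤ (εq * n + εq * n) + εq * n + εq * n := by linarith [hccbound]
      _ = 4 * (εq * n) := by ring
  -- conclude
  have hn0 : (0:ℝ) < n := by exact_mod_cast hn4
  rw [Real.dist_eq]
  have heq : (GX L wf n : ℝ) / n - 1/2^L = ((GX L wf n : ℝ) - (n:ℝ) * (1/2^L)) / n := by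
    field_simp
  show |(((Finset.Ioc 0 n).filter (MatchX L wf)).card : ℝ) / (n : ℝ) - 1/2^L| < ε
  have hGXdef : (((Finset.Ioc 0 n).filter (MatchX L wf)).card : ℝ) = (GX L wf n : ℝ) := rfl
  rw [hGXdef, heq, abs_div, abs_of_pos hn0, div_lt_iff₀ hn0]
  calc |(GX L wf n : ℝ) - (n:ℝ) * (1/2^L)| ≤ 4 * (εq * n) := hmain
    _ < ε * n := by
        rw [hεqdef]
        have hεn : (0:ℝ) < ε * n := by positivity
        linarith

end Aux

/-- There is a binary sequence that is normal in base 2 and satisfies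
`L_n(x)/log₂ n → 0`. -/
theorem normal_runratio_tendsto_zero :
    ∃ x : ℕ → Bool, NormalBaseTwo x ∧
      Tendsto (fun n : ℕ => (runL x n : ℝ) / Real.logb 2 (n : ℝ)) atTop (nhds 0) := by
  refine ⟨xx, ?_, ?_⟩
  · intro w hw
    have h := normal_xx w hw
    have hcnt : ∀ n : ℕ, occCount xx w n
        = ((Finset.Ioc 0 n).filter (MatchX w.length (fun k => w.getD k false))).card := by
      intro n
      unfold occCount
      have hIcc : Finset.Icc 1 n = Finset.Ioc 0 n := by
        ext a
        simp only [Finset.mem_Icc, Finset.mem_Ioc]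
        omega
      rw [hIcc]
      apply congrArg Finset.card
      apply Finset.filter_congr
      intro i _
      constructor
      · intro hh k hk
        exact hh k (Finset.mem_range.mpr hk)
      · intro hh k hk
        exact hh k (Finset.mem_range.mp hk)
    have hfun : (fun n : ℕ => (occCount xx w n : ℝ) / n)
        = fun n : ℕ => (((Finset.Ioc 0 n).filter
            (MatchX w.length (fun k => w.getD k false))).card : ℝ) / n := by
      funext n
      rw [hcnt]
    rw [hfun]
    exact h
  · -- run-length part
    have hrunle : ∀ n : ℕ, 1 ≤ n → runL xx n ≤ 2 * blk n := by
      intro n hn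
      classical
      unfold runL
      by_contra h
      push_neg at h
      have hne : Nat.findGreatest
          (fun j => ∃ i, i + j ≤ n ∧ ∀ k, 1 ≤ k → k ≤ j → xx (i + k) = true) n ≠ 0 := by
        omega
      have hP := Nat.findGreatest_of_ne_zero rfl hne
      obtain ⟨i, hij, hone⟩ := hP
      have := run_bound (blk_pos hn) (le_stt_blk n) hij hone
      omega
    apply squeeze_zero' (g := fun n : ℕ => 8 / (blk n : ℝ))
    · filter_upwards [eventually_ge_atTop 1] with n hn
      apply div_nonneg (by positivity)
      apply Real.logb_nonneg (by norm_num)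
      exact_mod_cast hn
    · filter_upwards [eventually_ge_atTop (stt 2 + 1)] with n hn
      have hn1 : 1 ≤ n := by
        have := le_stt 2
        omega
      set p := blk n with hp
      have hp3 : 3 ≤ p := by
        have : ¬ (blk n ≤ 2) := by
          rw [blk_le_iff]
          omega
        omega
      have hlogb : ((p-1 : ℕ)^3 : ℝ) ≤ Real.logb 2 n := by
        have hnge : (2:ℕ)^((p-1)^3) ≤ n := by
          have h1 : stt (p - 1) < n := stt_pred_lt hn1
          have h2 : NB (p-1) ≤ stt (p-1) := stt_ge_NB (by omega)
          have h3 : 2^((p-1)^3) ≤ NB (p-1) := NB_ge (by omega)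
          omega
        calc ((p-1 : ℕ)^3 : ℝ) = Real.logb 2 ((2:ℝ)^((p-1:ℕ)^3)) := by
              rw [Real.logb_pow, Real.logb_self_eq_one (by norm_num)]
              push_cast
              ring
          _ ≤ Real.logb 2 n := by
              apply (Real.logb_le_logb (by norm_num) (by positivity) ?_).mpr ?_
              · have : 1 ≤ n := hn1
                positivity
              · exact_mod_cast hnge
      have hlogpos : (0:ℝ) < ((p-1:ℕ)^3 : ℝ) := by
        have h1 : 1 ≤ p - 1 := by omega
        have : 1 ≤ (p-1)^3 := by
          calc 1 = 1^3 := by norm_num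
            _ ≤ (p-1)^3 := Nat.pow_le_pow_left h1 3
        exact_mod_cast (by omega : 0 < ((p-1)^3 : ℕ))
      have hrun : (runL xx n : ℝ) ≤ 2 * p := by
        exact_mod_cast hrunle n hn1
      calc (runL xx n : ℝ) / Real.logb 2 n ≤ (2 * p) / ((p-1:ℕ)^3 : ℝ) := by
            apply div_le_div₀ (by positivity) hrun hlogpos hlogb
        _ ≤ 8 / (p : ℝ) := by
            rw [div_le_div_iff₀ (by exact_mod_cast hlogpos) (by positivity)]
            have hcast : ((p-1:ℕ) : ℝ) = (p:ℝ) - 1 := by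
              push_cast [Nat.cast_sub (by omega : 1 ≤ p)]
              ring
            rw [hcast]
            have hpr : (3:ℝ) ≤ (p:ℝ) := by exact_mod_cast hp3
            have hhalf : (p:ℝ)/2 ≤ (p:ℝ) - 1 := by linarith
            have hcube : ((p:ℝ)/2)^3 ≤ ((p:ℝ)-1)^3 :=
              pow_le_pow_left₀ (by positivity) hhalf 3
            nlinarith [hcube, hpr, sq_nonneg ((p:ℝ))]
    · have hblk : Tendsto blk atTop atTop := by
        apply tendsto_atTop_atTop.mpr
        intro b
        refine ⟨stt b + 1, fun n hn => ?_⟩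
        by_contra h
        push_neg at h
        have : blk n ≤ b := by omega
        rw [blk_le_iff] at this
        omega
      have h8 : Tendsto (fun m : ℕ => 8 / (m:ℝ)) atTop (nhds 0) :=
        tendsto_const_div_atTop_nhds_zero_nat 8
      exact h8.comp hblk
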